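/- Let n ≥ 2 be an even integer. There exist a finite edge-index type E, endpoint maps s, t : E → Fin(n/2), a voltage assignment α : E → Z_n, and a map ω assigning to each vertex x ∈ Fin(n/2) an additive subgroup ω(x) of Z_n, such that the covering graph X^{(α,ω)} — defined as the simple graph whose vertex set is the set of pairs (x, K) with x ∈ Fin(n/2) and K a coset of ω(x) in Z_n, and with (x, K) adjacent to (y, H) if and only if there is an edge e ∈ E with endpoints {s(e), t(e)} = {x, y} (oriented from x to y) and (K + α(e)) ∩ H ≠ ∅ — is isomorphic to the 2-token graph F_2(K_n). In particular, F_2(K_n) for n even is a covering graph over a combined base graph on n/2 vertices with voltages in Z_n. -/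

import Mathlib

open SimpleGraph Finset

variable {V : Type*}

/-- The `k`-token graph of a simple graph `X`: vertices are the `k`-element subsets
of the vertex set, two subsets being adjacent when their symmetric difference is an
edge of `X`. -/
def tokenGraph [DecidableEq V] (X : SimpleGraph V) (k : ℕ) :
    SimpleGraph {A : Finset V // A.card = k} where
  Adj A B := ∃ a b : V, X.Adj a b ∧ (symmDiff A.val B.val) = {a, b}
  symm := by
    constructor; rintro A B ⟨a, b, hab, h⟩
    exact ⟨b, a, hab.symm, by rw [symmDiff_comm]; rw [h]; exact Finset.pair_comm a b⟩
  loopless := by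
    constructor; rintro A ⟨a, b, hab, h⟩
    simp only [symmDiff_self, Finset.bot_eq_empty] at h
    exact (Finset.insert_ne_empty a {b}) h.symm

/-- A simple graph is edge-transitive if its automorphism group acts transitively
on its edges. -/
def EdgeTransitive {W : Type*} (Y : SimpleGraph W) : Prop :=
  ∀ e ∈ Y.edgeSet, ∀ f ∈ Y.edgeSet, ∃ φ : Y ≃g Y, e.map φ = f

/-- A simple graph is vertex-transitive if its automorphism group acts transitively
on its vertices. -/
def VertexTransitive {W : Type*} (Y : SimpleGraph W) : Prop :=
  ∀ u v : W, ∃ φ : Y ≃g Y, φ u = v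

/-- The star graph `K_{1,n}` on vertex set `{0, 1, …, n}`, where the center `0`
is joined to each of the `n` leaves. -/
def starGraph (n : ℕ) : SimpleGraph (Fin (n + 1)) where
  Adj i j := i ≠ j ∧ (i = 0 ∨ j = 0)
  symm := by constructor; rintro i j ⟨hne, h⟩; exact ⟨hne.symm, h.symm⟩
  loopless := by constructor; rintro i ⟨hne, _⟩; exact hne rfl

/-- The covering graph of a combined base graph: the base (multi)graph has vertex set
`Fin m`, edge set `E` with endpoint maps `s t : E → Fin m`, a voltage `α e ∈ ZMod n`
on each edge, and a subgroup `ω x ≤ ZMod n` at each vertex.  The vertices of the cover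
are the pairs `(x, K)` with `K` a coset of `ω x`, and `(x, K)` is adjacent to `(y, H)`
iff some base edge `e` joins `x` to `y` (traversed from its source to its target) with
`(K + α e) ∩ H ≠ ∅`. -/
def coveringGraph {m n : ℕ} (E : Type) (s t : E → Fin m) (α : E → ZMod n)
    (ω : Fin m → AddSubgroup (ZMod n)) :
    SimpleGraph (Σ x : Fin m, {K : Set (ZMod n) // ∃ g : ZMod n,
      K = (fun z => g + z) '' (ω x : Set (ZMod n))}) where
  Adj v w := v ≠ w ∧ ∃ e : E,
    (s e = v.1 ∧ t e = w.1 ∧ (((fun z => z + α e) '' v.2.val) ∩ w.2.val).Nonempty) ∨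
    (s e = w.1 ∧ t e = v.1 ∧ (((fun z => z + α e) '' w.2.val) ∩ v.2.val).Nonempty)
  symm := by
    constructor; rintro v w ⟨hne, e, h⟩
    exact ⟨hne.symm, e, h.symm⟩
  loopless := by constructor; rintro v ⟨hne, _⟩; exact hne rfl


namespace TGAux

variable (n m : ℕ)

def dd (x : Fin m) : ZMod n := ((x.val + 1 : ℕ) : ZMod n)

noncomputable def om (x : Fin m) : AddSubgroup (ZMod n) :=
  if x.val + 1 = m then AddSubgroup.zmultiples ((m : ℕ) : ZMod n) else ⊥

abbrev CV := Σ x : Fin m, {K : Set (ZMod n) // ∃ g : ZMod n,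
      K = (fun z => g + z) '' (om n m x : Set (ZMod n))}

variable {n m}

lemma m_lt_n (hm : n = 2 * m) (hm1 : 1 ≤ m) : m < n := by omega

lemma cast_mm [NeZero n] (hm : n = 2 * m) :
    ((m : ℕ) : ZMod n) + ((m : ℕ) : ZMod n) = 0 := by
  have : ((2 * m : ℕ) : ZMod n) = 0 := by rw [← hm]; exact ZMod.natCast_self n
  push_cast at this
  calc ((m : ℕ) : ZMod n) + ((m : ℕ) : ZMod n) = 2 * ((m : ℕ) : ZMod n) := (two_mul _).symm
    _ = 0 := this

lemma mem_om [NeZero n] (hm : n = 2 * m) {x : Fin m} {s : ZMod n} (hs : s ∈ om n m x) :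
    s = 0 ∨ (s = ((m : ℕ) : ZMod n) ∧ x.val + 1 = m) := by
  unfold om at hs
  by_cases h : x.val + 1 = m
  · rw [if_pos h] at hs
    rw [AddSubgroup.mem_zmultiples_iff] at hs
    obtain ⟨k, hk⟩ := hs
    have h2 : (2 : ℤ) • ((m : ℕ) : ZMod n) = 0 := by
      have := cast_mm hm (n := n); rw [two_smul]; exact this
    have hk2 : k = 2 * (k / 2) + k % 2 := (Int.mul_ediv_add_emod k 2).symm
    rcases Int.emod_two_eq k with h0 | h1
    · left
      rw [← hk, hk2, h0, add_zero, mul_comm, mul_smul, h2, smul_zero]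
    · right
      refine ⟨?_, h⟩
      rw [← hk, hk2, h1, add_smul, mul_comm, mul_smul, h2, smul_zero, zero_add, one_smul]
  · rw [if_neg h] at hs
    exact Or.inl hs

lemma zero_mem_om (x : Fin m) : (0 : ZMod n) ∈ om n m x := by
  unfold om; split
  · exact AddSubgroup.zero_mem _
  · exact AddSubgroup.zero_mem _

lemma dd_lt {x : Fin m} (hm : n = 2 * m) : x.val + 1 < n := by have := x.isLt; omega

lemma dd_ne_zero [NeZero n] (hm : n = 2 * m) (x : Fin m) : dd n m x ≠ 0 := by
  intro h
  rw [dd, ZMod.natCast_eq_zero_iff] at h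
  have := Nat.le_of_dvd (by omega) h
  have := x.isLt
  omega

lemma dd_inj [NeZero n] (hm : n = 2 * m) {x y : Fin m} (h : dd n m x = dd n m y) : x = y := by
  unfold dd at h
  have hx : ((x.val + 1 : ℕ) : ZMod n).val = x.val + 1 := ZMod.val_cast_of_lt (dd_lt hm)
  have hy : ((y.val + 1 : ℕ) : ZMod n).val = y.val + 1 := ZMod.val_cast_of_lt (dd_lt hm)
  have : x.val = y.val := by rw [h] at hx; omega
  exact Fin.ext this

lemma dd_of_top [NeZero n] {x : Fin m} (h : x.val + 1 = m) : dd n m x = ((m : ℕ) : ZMod n) := by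
  unfold dd; rw [h]

lemma coset_shift {A : Type*} [AddCommGroup A] (S : AddSubgroup A) {s : A} (hs : s ∈ S)
    (g : A) : (fun z => (g + s) + z) '' (S : Set A) = (fun z => g + z) '' (S : Set A) := by
  ext w
  constructor
  · rintro ⟨a, ha, rfl⟩
    exact ⟨s + a, S.add_mem hs ha, (add_assoc g s a).symm⟩
  · rintro ⟨a, ha, rfl⟩
    exact ⟨-s + a, S.add_mem (S.neg_mem hs) ha, by abel⟩

lemma pair_eq [NeZero n] (hm : n = 2 * m) {x : Fin m} {g1 g2 : ZMod n}
    (h : (fun z => g1 + z) '' (om n m x : Set (ZMod n))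
       = (fun z => g2 + z) '' (om n m x : Set (ZMod n))) :
    ({g1, g1 + dd n m x} : Finset (ZMod n)) = {g2, g2 + dd n m x} := by
  have hg2 : g2 ∈ (fun z => g1 + z) '' (om n m x : Set (ZMod n)) := by
    rw [h]; exact ⟨0, zero_mem_om x, by simp⟩
  obtain ⟨s, hs, hg⟩ := hg2
  rcases mem_om hm hs with rfl | ⟨rfl, htop⟩
  · rw [← hg]; simp
  · have hd : dd n m x = ((m : ℕ) : ZMod n) := dd_of_top htop
    have h2 : ((m : ℕ) : ZMod n) + ((m : ℕ) : ZMod n) = 0 := cast_mm hm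
    rw [← hg, hd]
    have : g1 + (m : ZMod n) + (m : ZMod n) = g1 := by rw [add_assoc, h2, add_zero]
    rw [this]
    exact Finset.pair_comm _ _


variable (n m) in
noncomputable def FF [NeZero n] (v : CV n m) : Finset (ZMod n) :=
  {v.2.2.choose, v.2.2.choose + dd n m v.1}

lemma FF_spec [NeZero n] (hm : n = 2 * m) {v : CV n m} {g : ZMod n}
    (h : v.2.1 = (fun z => g + z) '' (om n m v.1 : Set (ZMod n))) :
    FF n m v = {g, g + dd n m v.1} := by
  apply pair_eq hm
  rw [← v.2.2.choose_spec, h]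

lemma FF_card [NeZero n] (hm : n = 2 * m) (v : CV n m) : (FF n m v).card = 2 := by
  apply Finset.card_pair
  intro h
  exact dd_ne_zero hm v.1 (by simpa using h.symm)

lemma coe_FF [NeZero n] (hm : n = 2 * m) (v : CV n m) :
    ((FF n m v : Finset (ZMod n)) : Set (ZMod n))
      = v.2.1 ∪ (fun z => z + dd n m v.1) '' v.2.1 := by
  obtain ⟨g, hg⟩ := v.2.2
  rw [FF_spec hm hg, hg]
  ext z
  simp only [Finset.coe_insert, Finset.coe_singleton, Set.mem_insert_iff,
    Set.mem_singleton_iff, Set.mem_union, Set.mem_image]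
  constructor
  · rintro (rfl | rfl)
    · exact Or.inl ⟨0, zero_mem_om v.1, by simp⟩
    · exact Or.inr ⟨g, ⟨0, zero_mem_om v.1, by simp⟩, rfl⟩
  · rintro (⟨s, hs, rfl⟩ | ⟨u, ⟨s, hs, rfl⟩, rfl⟩)
    · rcases mem_om hm hs with rfl | ⟨rfl, htop⟩
      · exact Or.inl (by simp)
      · exact Or.inr (by rw [dd_of_top htop])
    · rcases mem_om hm hs with rfl | ⟨rfl, htop⟩
      · exact Or.inr (by simp)
      · left
        rw [dd_of_top htop, add_assoc, cast_mm hm, add_zero]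

lemma sum_eq [NeZero n] (hm : n = 2 * m) {x y : Fin m}
    (h : dd n m x + dd n m y = 0) : x.val + 1 = m ∧ y.val + 1 = m := by
  unfold dd at h
  rw [← Nat.cast_add, ZMod.natCast_eq_zero_iff] at h
  have h1 := Nat.le_of_dvd (by omega) h
  have h2 := x.isLt
  have h3 := y.isLt
  omega

lemma mk_eq_mk (x : Fin m) {K H : {K : Set (ZMod n) // ∃ g : ZMod n,
      K = (fun z => g + z) '' (om n m x : Set (ZMod n))}} (h : K.1 = H.1) :
    (⟨x, K⟩ : CV n m) = ⟨x, H⟩ := by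
  congr 1
  exact Subtype.ext h

lemma mm_mem_om {x : Fin m} (htop : x.val + 1 = m) : ((m : ℕ) : ZMod n) ∈ om n m x := by
  unfold om
  rw [if_pos htop]
  exact AddSubgroup.mem_zmultiples _

lemma FF_inj [NeZero n] (hm : n = 2 * m) {v w : CV n m}
    (h : FF n m v = FF n m w) : v = w := by
  obtain ⟨x, K⟩ := v
  obtain ⟨y, H⟩ := w
  obtain ⟨g1, hg1⟩ : ∃ g, K.1 = (fun z => g + z) '' (om n m x : Set (ZMod n)) := K.2
  obtain ⟨g2, hg2⟩ : ∃ g, H.1 = (fun z => g + z) '' (om n m y : Set (ZMod n)) := H.2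
  rw [FF_spec hm (v := ⟨x, K⟩) hg1, FF_spec hm (v := ⟨y, H⟩) hg2] at h
  simp only at h
  have h1 : g1 = g2 ∨ g1 = g2 + dd n m y := by
    have : g1 ∈ ({g2, g2 + dd n m y} : Finset (ZMod n)) := by rw [← h]; simp
    simpa using this
  have h2 : g1 + dd n m x = g2 ∨ g1 + dd n m x = g2 + dd n m y := by
    have : g1 + dd n m x ∈ ({g2, g2 + dd n m y} : Finset (ZMod n)) := by rw [← h]; simp
    simpa using this
  rcases h1 with rfl | rfl
  · rcases h2 with h2 | h2
    · exact absurd (by simpa using h2) (dd_ne_zero hm x)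
    · have hxy : x = y := dd_inj hm (by simpa using h2)
      subst hxy
      exact mk_eq_mk x (by rw [hg1, hg2])
  · rcases h2 with h2 | h2
    · have hsum : dd n m x + dd n m y = 0 := by
        have h3 : g2 + (dd n m x + dd n m y) = g2 + 0 := by linear_combination h2
        exact add_left_cancel h3
      obtain ⟨hx, hy⟩ := sum_eq hm hsum
      have hxy : x = y := Fin.ext (by omega)
      subst hxy
      refine mk_eq_mk x ?_
      rw [hg1, hg2, dd_of_top hx]
      exact coset_shift (om n m x) (mm_mem_om hx) g2
    · have : dd n m x = 0 := by
        have h3 : g2 + dd n m x = g2 + 0 := by linear_combination h2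
        exact add_left_cancel h3
      exact absurd this (dd_ne_zero hm x)

lemma FF_surj [NeZero n] (hm : n = 2 * m) (hm1 : 1 ≤ m) (A : Finset (ZMod n))
    (hA : A.card = 2) : ∃ v : CV n m, FF n m v = A := by
  obtain ⟨a, b, hab, rfl⟩ := Finset.card_eq_two.mp hA
  set δ := b - a with hδdef
  have hδ : δ ≠ 0 := sub_ne_zero.mpr (Ne.symm hab)
  have hk1 : 1 ≤ δ.val := by
    rcases Nat.eq_zero_or_pos δ.val with h0 | h0
    · exact absurd ((ZMod.val_eq_zero δ).mp h0) hδ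
    · exact h0
  have hk2 : δ.val < n := ZMod.val_lt δ
  by_cases hle : δ.val ≤ m
  · refine ⟨⟨⟨δ.val - 1, by omega⟩,
      ⟨(fun z => a + z) '' (om n m ⟨δ.val - 1, by omega⟩ : Set (ZMod n)), a, rfl⟩⟩, ?_⟩
    rw [FF_spec hm rfl]
    have hd : dd n m ⟨δ.val - 1, by omega⟩ = δ := by
      unfold dd
      simp only
      rw [show δ.val - 1 + 1 = δ.val by omega]
      exact ZMod.natCast_zmod_val δ
    rw [hd, hδdef, add_sub_cancel]
  · have hk3 : 1 ≤ n - δ.val ∧ n - δ.val ≤ m := by omega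
    refine ⟨⟨⟨n - δ.val - 1, by omega⟩,
      ⟨(fun z => b + z) '' (om n m ⟨n - δ.val - 1, by omega⟩ : Set (ZMod n)), b, rfl⟩⟩, ?_⟩
    rw [FF_spec hm rfl]
    have hd : dd n m ⟨n - δ.val - 1, by omega⟩ = a - b := by
      unfold dd
      simp only
      rw [show n - δ.val - 1 + 1 = n - δ.val by omega]
      rw [Nat.cast_sub hk2.le, ZMod.natCast_self, ZMod.natCast_zmod_val, hδdef]
      ring
    rw [hd]
    rw [show b + (a - b) = a by ring]
    exact Finset.pair_comm b a

lemma token_adj_iff {W : Type*} [DecidableEq W] (A B : {A : Finset W // A.card = 2}) :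
    (tokenGraph (⊤ : SimpleGraph W) 2).Adj A B ↔ A ≠ B ∧ (A.val ∩ B.val).Nonempty := by
  constructor
  · rintro ⟨a, b, hab, h⟩
    rw [SimpleGraph.top_adj] at hab
    constructor
    · intro hAB
      rw [hAB, symmDiff_self] at h
      exact Finset.insert_ne_empty a {b} h.symm
    · by_contra hempty
      rw [Finset.not_nonempty_iff_eq_empty] at hempty
      have hdisj : Disjoint A.val B.val := Finset.disjoint_iff_inter_eq_empty.mpr hempty
      have hcard : (symmDiff A.val B.val).card = 4 := by
        rw [symmDiff_def]
        have : A.val \ B.val = A.val := Finset.sdiff_eq_self_of_disjoint hdisj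
        have h2 : B.val \ A.val = B.val := Finset.sdiff_eq_self_of_disjoint hdisj.symm
        rw [Finset.sup_eq_union, this, h2, Finset.card_union_of_disjoint hdisj, A.2, B.2]
      rw [h] at hcard
      have := Finset.card_insert_le a ({b} : Finset W)
      simp at this
      omega
  · rintro ⟨hAB, c, hc⟩
    rw [Finset.mem_inter] at hc
    obtain ⟨a, haA, hac⟩ : ∃ a, A.val = {c, a} ∧ a ≠ c := by
      obtain ⟨x, y, hxy, hA⟩ := Finset.card_eq_two.mp A.2
      have : c ∈ ({x, y} : Finset W) := hA ▸ hc.1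
      rcases Finset.mem_insert.mp this with rfl | h
      · exact ⟨y, hA, fun h => hxy h.symm⟩
      · rw [Finset.mem_singleton] at h
        subst h
        exact ⟨x, by rw [hA]; exact Finset.pair_comm x c, hxy⟩
    obtain ⟨b, hbB, hbc⟩ : ∃ b, B.val = {c, b} ∧ b ≠ c := by
      obtain ⟨x, y, hxy, hB⟩ := Finset.card_eq_two.mp B.2
      have : c ∈ ({x, y} : Finset W) := hB ▸ hc.2
      rcases Finset.mem_insert.mp this with rfl | h
      · exact ⟨y, hB, fun h => hxy h.symm⟩
      · rw [Finset.mem_singleton] at h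
        subst h
        exact ⟨x, by rw [hB]; exact Finset.pair_comm x c, hxy⟩
    have hab : a ≠ b := by
      intro h
      subst h
      exact hAB (Subtype.ext (by rw [haA, hbB]))
    refine ⟨a, b, by rw [SimpleGraph.top_adj]; exact hab, ?_⟩
    ext z
    rw [Finset.mem_symmDiff, haA, hbB]
    simp only [Finset.mem_insert, Finset.mem_singleton]
    constructor
    · rintro (⟨rfl | rfl, h2⟩ | ⟨rfl | rfl, h2⟩) <;> tauto
    · rintro (rfl | rfl)
      · exact Or.inl ⟨Or.inr rfl, by push_neg; exact ⟨hac, hab⟩⟩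
      · exact Or.inr ⟨Or.inr rfl, by push_neg; exact ⟨hbc, fun h => hab h.symm⟩⟩

variable (n m) in
def EE : Type := {p : Fin m × Fin m × ZMod n //
  p.2.2 = 0 ∨ p.2.2 = dd n m p.1 ∨ p.2.2 = -(dd n m p.2.1)
    ∨ p.2.2 = dd n m p.1 - dd n m p.2.1}

noncomputable instance [NeZero n] : Fintype (EE n m) := by
  unfold EE
  classical
  infer_instance

variable (n m) in
def ss : EE n m → Fin m := fun e => e.1.1
variable (n m) in
def tt : EE n m → Fin m := fun e => e.1.2.1
variable (n m) in
def aa : EE n m → ZMod n := fun e => e.1.2.2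

lemma adj_helper [NeZero n] (hm : n = 2 * m) (v w : CV n m) (e : EE n m)
    (hs : ss n m e = v.1) (ht : tt n m e = w.1)
    (hne : (((fun z => z + aa n m e) '' v.2.1) ∩ w.2.1).Nonempty) :
    (((FF n m v : Finset (ZMod n)) : Set (ZMod n))
      ∩ ((FF n m w : Finset (ZMod n)) : Set (ZMod n))).Nonempty := by
  obtain ⟨p, ⟨u, hu, rfl⟩, hp2⟩ := hne
  rw [coe_FF hm v, coe_FF hm w]
  have he2 : aa n m e = 0 ∨ aa n m e = dd n m v.1 ∨ aa n m e = -(dd n m w.1)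
      ∨ aa n m e = dd n m v.1 - dd n m w.1 := by
    have h := e.2
    rw [show e.1.1 = v.1 from hs, show e.1.2.1 = w.1 from ht] at h
    exact h
  simp only at hp2
  rcases he2 with h0 | h0 | h0 | h0 <;> rw [h0] at hp2
  · exact ⟨u, Or.inl hu, Or.inl (by simpa using hp2)⟩
  · exact ⟨u + dd n m v.1, Or.inr ⟨u, hu, rfl⟩, Or.inl hp2⟩
  · exact ⟨u, Or.inl hu, Or.inr ⟨u + -dd n m w.1, hp2, by show _ + _ = _; ring⟩⟩
  · exact ⟨u + dd n m v.1, Or.inr ⟨u, hu, rfl⟩,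
      Or.inr ⟨u + (dd n m v.1 - dd n m w.1), hp2, by show _ + _ = _; ring⟩⟩

lemma cover_adj_iff [NeZero n] (hm : n = 2 * m) (v w : CV n m) :
    (coveringGraph (EE n m) (ss n m) (tt n m) (aa n m) (om n m)).Adj v w
      ↔ v ≠ w ∧ (((FF n m v : Finset (ZMod n)) : Set (ZMod n))
      ∩ ((FF n m w : Finset (ZMod n)) : Set (ZMod n))).Nonempty := by
  constructor
  · rintro ⟨hne, e, he⟩
    refine ⟨hne, ?_⟩
    rcases he with ⟨hs, ht, h⟩ | ⟨hs, ht, h⟩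
    · exact adj_helper hm v w e hs ht h
    · have := adj_helper hm w v e hs ht h
      rwa [Set.inter_comm] at this
  · rintro ⟨hne, z, hzv, hzw⟩
    refine ⟨hne, ?_⟩
    rw [coe_FF hm v] at hzv
    rw [coe_FF hm w] at hzw
    rcases hzv with hzv | ⟨u, hu, rfl⟩
    · rcases hzw with hzw | ⟨u', hu', heq⟩
      · refine ⟨⟨(v.1, w.1, 0), Or.inl rfl⟩, Or.inl ⟨rfl, rfl, ⟨z + 0, ⟨z, hzv, rfl⟩, ?_⟩⟩⟩
        simpa using hzw
      · refine ⟨⟨(v.1, w.1, -(dd n m w.1)), Or.inr (Or.inr (Or.inl rfl))⟩,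
          Or.inl ⟨rfl, rfl, ⟨z + -(dd n m w.1), ⟨z, hzv, rfl⟩, ?_⟩⟩⟩
        have heq' : u' + dd n m w.1 = z := heq
        have : z + -(dd n m w.1) = u' := by linear_combination -heq'
        rwa [this]
    · rcases hzw with hzw | ⟨u', hu', heq⟩
      · exact ⟨⟨(v.1, w.1, dd n m v.1), Or.inr (Or.inl rfl)⟩,
          Or.inl ⟨rfl, rfl, ⟨u + dd n m v.1, ⟨u, hu, rfl⟩, hzw⟩⟩⟩
      · refine ⟨⟨(v.1, w.1, dd n m v.1 - dd n m w.1), Or.inr (Or.inr (Or.inr rfl))⟩,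
          Or.inl ⟨rfl, rfl, ⟨u + (dd n m v.1 - dd n m w.1), ⟨u, hu, rfl⟩, ?_⟩⟩⟩
        have heq' : u' + dd n m w.1 = u + dd n m v.1 := heq
        have : u + (dd n m v.1 - dd n m w.1) = u' := by linear_combination -heq'
        rwa [this]

noncomputable def isoZ [NeZero n] (hm : n = 2 * m) (hm1 : 1 ≤ m) :
    coveringGraph (EE n m) (ss n m) (tt n m) (aa n m) (om n m)
      ≃g tokenGraph (⊤ : SimpleGraph (ZMod n)) 2 := by
  classical
  have hbij : Function.Bijective
      (fun v : CV n m => (⟨FF n m v, FF_card hm v⟩ : {A : Finset (ZMod n) // A.card = 2})) := by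
    constructor
    · intro v w h
      exact FF_inj hm (congrArg Subtype.val h)
    · rintro ⟨A, hA⟩
      obtain ⟨v, hv⟩ := FF_surj hm hm1 A hA
      exact ⟨v, Subtype.ext hv⟩
  refine ⟨Equiv.ofBijective _ hbij, ?_⟩
  intro v w
  rw [token_adj_iff, cover_adj_iff hm]
  simp only [Equiv.ofBijective_apply]
  constructor
  · rintro ⟨hne, h⟩
    refine ⟨fun h' => hne (by rw [h']), ?_⟩
    obtain ⟨z, hz⟩ := h
    rw [Finset.mem_inter] at hz
    exact ⟨z, Finset.mem_coe.mpr hz.1, Finset.mem_coe.mpr hz.2⟩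
  · rintro ⟨hne, h⟩
    obtain ⟨z, hz⟩ := h
    rw [Set.mem_inter_iff, Finset.mem_coe, Finset.mem_coe] at hz
    exact ⟨fun h' => hne (FF_inj hm (congrArg Subtype.val h')),
      ⟨z, Finset.mem_inter.mpr hz⟩⟩

def tokenRelabel {V W : Type*} [DecidableEq V] [DecidableEq W] (e : V ≃ W) :
    tokenGraph (⊤ : SimpleGraph V) 2 ≃g tokenGraph (⊤ : SimpleGraph W) 2 := by
  refine ⟨Equiv.subtypeEquiv (Equiv.finsetCongr e) (fun A => ?_), ?_⟩
  · simp [Equiv.finsetCongr_apply, Finset.card_map]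
  · intro A B
    rw [token_adj_iff, token_adj_iff]
    constructor
    · rintro ⟨hne, h⟩
      refine ⟨fun h' => hne (by rw [h']), ?_⟩
      obtain ⟨z, hz⟩ := h
      simp only [Equiv.subtypeEquiv_apply, Equiv.finsetCongr_apply, ← Finset.map_inter,
        Finset.mem_map] at hz
      obtain ⟨u, hu, _⟩ := hz
      exact ⟨u, hu⟩
    · rintro ⟨hne, z, hz⟩
      refine ⟨fun h' => hne ?_, ?_⟩
      · have := congrArg (fun X => X.val.map e.symm.toEmbedding) h'
        simp only [Equiv.subtypeEquiv_apply, Equiv.finsetCongr_apply, Finset.map_map] at this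
        apply Subtype.ext
        simpa using this
      · refine ⟨e z, ?_⟩
        simp only [Equiv.subtypeEquiv_apply, Equiv.finsetCongr_apply, ← Finset.map_inter,
          Finset.mem_map]
        exact ⟨z, hz, rfl⟩

end TGAux

/-- For even `n`, the token graph `F_2(K_n)` is a covering graph over a combined base
graph on `n/2` vertices with voltages in `ZMod n`. -/
theorem tokenGraph_complete_two_is_cover (n : ℕ) (hn : 2 ≤ n) (hev : Even n) :
    ∃ (E : Type) (_ : Fintype E) (s t : E → Fin (n / 2)) (α : E → ZMod n)
      (ω : Fin (n / 2) → AddSubgroup (ZMod n)),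
      Nonempty (coveringGraph E s t α ω ≃g tokenGraph (⊤ : SimpleGraph (Fin n)) 2) := by
  have hn0 : NeZero n := ⟨by omega⟩
  have hm : n = 2 * (n / 2) := by
    obtain ⟨r, hr⟩ := hev
    omega
  have hm1 : 1 ≤ n / 2 := by omega
  classical
  refine ⟨TGAux.EE n (n / 2), inferInstance, TGAux.ss n (n / 2), TGAux.tt n (n / 2),
    TGAux.aa n (n / 2), TGAux.om n (n / 2), ⟨?_⟩⟩
  have eqv : ZMod n ≃ Fin n := Fintype.equivFinOfCardEq (ZMod.card n)
  exact (TGAux.isoZ hm hm1).trans (TGAux.tokenRelabel eqv)
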